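/- The three radii r₁ = 2M(1 + cos((2/3)arccos(−a/M))), r₂ = 2M(1 + cos((2/3)arccos(a/M))), r₃ = M + 2√(M² − a²/3)·cos((1/3)arccos(M(M²−a²)/(M²−a²/3)^{3/2})) satisfy M < r₊ < r₁ < r₃ < r₂ < 4M for all a ∈ (0, M). -/

import Mathlib

set_option maxHeartbeats 1000000

private lemma cos_lt_cos_aux (x y : ℝ) (hx : 0 ≤ x) (hy : y ≤ Real.pi) (hxy : x < y) :
    Real.cos y < Real.cos x :=
  Real.strictAntiOn_cos ⟨hx, by linarith⟩ ⟨by linarith, hy⟩ hxy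

private lemma P_anti_aux (M a u v : ℝ) (hu : M ≤ u) (huv : u ≤ v) (hv : v ≤ 3 * M)
    (hPu : u ^ 3 - 6 * M * u ^ 2 + 9 * M ^ 2 * u - 4 * a ^ 2 * M = 0)
    (hPv : v ^ 3 - 6 * M * v ^ 2 + 9 * M ^ 2 * v - 4 * a ^ 2 * M > 0) : False := by
  have h1 : 0 ≤ (v - u) * ((u - M) * (3 * M - u)) :=
    mul_nonneg (by linarith) (mul_nonneg (by linarith) (by linarith))
  have h2 : 0 ≤ (v - u) * ((v - M) * (3 * M - v)) :=
    mul_nonneg (by linarith) (mul_nonneg (by linarith) (by linarith))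
  have h3 : 0 ≤ (v - u) * ((u - M) * (3 * M - v)) :=
    mul_nonneg (by linarith) (mul_nonneg (by linarith) (by linarith))
  have h4 : 0 ≤ (v - u) * ((v - M) * (3 * M - u)) :=
    mul_nonneg (by linarith) (mul_nonneg (by linarith) (by linarith))
  have hid : 2 * (v ^ 3 - 6 * M * v ^ 2 + 9 * M ^ 2 * v - 4 * a ^ 2 * M)
      = 2 * (u ^ 3 - 6 * M * u ^ 2 + 9 * M ^ 2 * u - 4 * a ^ 2 * M)
        - (2 * ((v - u) * ((u - M) * (3 * M - u)))
          + 2 * ((v - u) * ((v - M) * (3 * M - v)))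
          + (v - u) * ((u - M) * (3 * M - v))
          + (v - u) * ((v - M) * (3 * M - u))) := by ring
  linarith [hPu, hPv, h1, h2, h3, h4, hid]

private lemma Q_mono_aux (M a s u v : ℝ) (hs : 0 < s) (hs2 : s ^ 2 = M ^ 2 - a ^ 2 / 3)
    (hu : M + s ≤ u) (huv : u ≤ v)
    (hQu : u ^ 3 - 3 * M * u ^ 2 + a ^ 2 * u + a ^ 2 * M = 0)
    (hQv : v ^ 3 - 3 * M * v ^ 2 + a ^ 2 * v + a ^ 2 * M < 0) : False := by
  have h1 : 0 ≤ (v - u) * (s * (u - M - s)) :=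
    mul_nonneg (by linarith) (mul_nonneg hs.le (by linarith))
  have h2 : 0 ≤ (v - u) * (s * (v - M - s)) :=
    mul_nonneg (by linarith) (mul_nonneg hs.le (by linarith))
  have h3 : 0 ≤ (v - u) * (u - M - s) ^ 2 := mul_nonneg (by linarith) (sq_nonneg _)
  have h4 : 0 ≤ (v - u) * (v - M - s) ^ 2 := mul_nonneg (by linarith) (sq_nonneg _)
  have h5 : 0 ≤ (v - u) * ((u - M - s) * (v - M - s)) :=
    mul_nonneg (by linarith) (mul_nonneg (by linarith) (by linarith))
  have hid : (v ^ 3 - 3 * M * v ^ 2 + a ^ 2 * v + a ^ 2 * M)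
      - (u ^ 3 - 3 * M * u ^ 2 + a ^ 2 * u + a ^ 2 * M)
      = 3 * ((v - u) * (s * (u - M - s))) + 3 * ((v - u) * (s * (v - M - s)))
        + (v - u) * (u - M - s) ^ 2 + (v - u) * (v - M - s) ^ 2
        + (v - u) * ((u - M - s) * (v - M - s)) := by
    linear_combination (3 * (v - u)) * hs2
  linarith [hQu, hQv, h1, h2, h3, h4, h5, hid]

/-- Ordering of the trapping radii: for all `a ∈ (0, M)`,
`M < r₊ < r₁ < r₃ < r₂ < 4M`. -/
theorem trapping_radii_order (M a : ℝ) (hM : 0 < M) (ha : 0 < a) (haM : a < M)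
    (rp r1 r2 r3 : ℝ)
    (hrp : rp = M + Real.sqrt (M ^ 2 - a ^ 2))
    (hr1 : r1 = 2 * M * (1 + Real.cos ((2 / 3) * Real.arccos (-(a / M)))))
    (hr2 : r2 = 2 * M * (1 + Real.cos ((2 / 3) * Real.arccos (a / M))))
    (hr3 : r3 = M + 2 * Real.sqrt (M ^ 2 - a ^ 2 / 3) *
      Real.cos ((1 / 3) * Real.arccos
        (M * (M ^ 2 - a ^ 2) / (M ^ 2 - a ^ 2 / 3) ^ ((3 : ℝ) / 2)))) :
    M < rp ∧ rp < r1 ∧ r1 < r3 ∧ r3 < r2 ∧ r2 < 4 * M := by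
  have hpi := Real.pi_pos
  have hMne : M ≠ 0 := ne_of_gt hM
  have ha2 : 0 < a ^ 2 := pow_pos ha 2
  have ha2M2 : a ^ 2 < M ^ 2 := by
    have := mul_lt_mul_of_pos_left haM ha
    have := mul_lt_mul_of_pos_right haM hM
    calc a ^ 2 = a * a := sq a
    _ < a * M := mul_lt_mul_of_pos_left haM ha
    _ < M * M := mul_lt_mul_of_pos_right haM hM
    _ = M ^ 2 := (sq M).symm
  have hx0 : 0 < a / M := div_pos ha hM
  have hx1 : a / M < 1 := (div_lt_one hM).2 haM
  -- w = sqrt(M^2 - a^2)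
  set w := Real.sqrt (M ^ 2 - a ^ 2) with hw
  have hw2 : w ^ 2 = M ^ 2 - a ^ 2 := Real.sq_sqrt (by linarith)
  have hw0 : 0 < w := Real.sqrt_pos.2 (by linarith)
  have hwM : w < M := by
    have h2 : w ^ 2 < M ^ 2 := by linarith
    exact lt_of_pow_lt_pow_left₀ 2 hM.le h2
  -- A1 and c1
  set A1 := Real.arccos (-(a / M)) with hA1
  have hA1l : Real.pi / 2 < A1 := by
    rcases lt_or_ge (Real.pi / 2) A1 with h | h
    · exact h
    · exact absurd (Real.arccos_le_pi_div_two.1 h) (by linarith)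
  have hA1u : A1 < Real.pi :=
    lt_of_le_of_ne (Real.arccos_le_pi _) (fun h => by
      have := Real.arccos_eq_pi.1 h; linarith)
  set c1 := Real.cos ((2 / 3) * A1) with hc1
  have hc1u : c1 < 1 / 2 := by
    have h := cos_lt_cos_aux (Real.pi / 3) ((2 / 3) * A1) (by positivity) (by linarith)
      (by linarith)
    rwa [Real.cos_pi_div_three, ← hc1] at h
  have hc1l : -(1 / 2) < c1 := by
    have h23 : Real.cos (2 * Real.pi / 3) = -(1 / 2) := by
      rw [show (2 * Real.pi / 3) = Real.pi - Real.pi / 3 by ring, Real.cos_pi_sub,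
        Real.cos_pi_div_three]
    have h := cos_lt_cos_aux ((2 / 3) * A1) (2 * Real.pi / 3)
      (by linarith) (by linarith) (by linarith)
    rwa [h23, ← hc1] at h
  have hcA1 : Real.cos A1 = -(a / M) := Real.cos_arccos (by linarith) (by linarith)
  have hkey1 : M ^ 2 * (4 * c1 ^ 3 - 3 * c1) = 2 * a ^ 2 - M ^ 2 := by
    have h3 : (3 : ℝ) * ((2 / 3) * A1) = 2 * A1 := by ring
    have h := Real.cos_three_mul ((2 / 3) * A1)
    rw [← hc1, h3, Real.cos_two_mul, hcA1] at h
    have hMsq : M ^ 2 ≠ 0 := pow_ne_zero 2 hMne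
    have h' : 2 * (a / M) ^ 2 - 1 = 4 * c1 ^ 3 - 3 * c1 := by
      rw [← h]; ring
    field_simp at h'
    linarith [h']
  have hr1l : M < r1 := by
    have := mul_pos hM (by linarith : (0:ℝ) < 2 * c1 + 1)
    rw [hr1]; linarith [this]
  have hr1u : r1 < 3 * M := by
    have := mul_pos hM (by linarith : (0:ℝ) < 1 - 2 * c1)
    rw [hr1]; linarith [this]
  -- P(r1) = 0
  have hP1 : r1 ^ 3 - 6 * M * r1 ^ 2 + 9 * M ^ 2 * r1 - 4 * a ^ 2 * M = 0 := by
    rw [hr1]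
    linear_combination 2 * M * hkey1
  -- A2 and c2
  set A2 := Real.arccos (a / M) with hA2
  have hA2l : 0 < A2 := Real.arccos_pos.2 hx1
  have hA2u : A2 < Real.pi / 2 := Real.arccos_lt_pi_div_two.2 hx0
  set c2 := Real.cos ((2 / 3) * A2) with hc2
  have hc2u : c2 < 1 := by
    have h := cos_lt_cos_aux 0 ((2 / 3) * A2) le_rfl (by linarith) (by positivity)
    rwa [Real.cos_zero, ← hc2] at h
  have hc2l : 1 / 2 < c2 := by
    have h := cos_lt_cos_aux ((2 / 3) * A2) (Real.pi / 3) (by positivity)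
      (by linarith) (by linarith)
    rwa [Real.cos_pi_div_three, ← hc2] at h
  have hr2l : 3 * M < r2 := by
    have := mul_pos hM (by linarith : (0:ℝ) < 2 * c2 - 1)
    rw [hr2]; linarith [this]
  have hr2u : r2 < 4 * M := by
    have := mul_pos hM (by linarith : (0:ℝ) < 1 - c2)
    rw [hr2]; linarith [this]
  -- s = sqrt(M^2 - a^2/3)
  set s := Real.sqrt (M ^ 2 - a ^ 2 / 3) with hs
  have hspos : (0:ℝ) ≤ M ^ 2 - a ^ 2 / 3 := by linarith
  have hs2 : s ^ 2 = M ^ 2 - a ^ 2 / 3 := Real.sq_sqrt hspos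
  have hs0 : 0 < s := Real.sqrt_pos.2 (by linarith)
  have hsM : s < M := by
    have h2 : s ^ 2 < M ^ 2 := by linarith
    exact lt_of_pow_lt_pow_left₀ 2 hM.le h2
  have hs3 : (M ^ 2 - a ^ 2 / 3) ^ ((3 : ℝ) / 2) = s ^ 3 := by
    rw [show ((3:ℝ)/2) = (1/2)*3 by norm_num, Real.rpow_mul hspos, ← Real.sqrt_eq_rpow,
      show ((3:ℝ)) = ((3:ℕ):ℝ) by norm_num, Real.rpow_natCast]
    norm_num
    rfl
  set K := M * (M ^ 2 - a ^ 2) / (M ^ 2 - a ^ 2 / 3) ^ ((3 : ℝ) / 2) with hK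
  have hs3pos : 0 < s ^ 3 := by positivity
  have hKval : K = M * (M ^ 2 - a ^ 2) / s ^ 3 := by rw [hK, hs3]
  have hK0 : 0 < K := by
    rw [hKval]; exact div_pos (mul_pos hM (by linarith)) hs3pos
  have hK1 : K < 1 := by
    rw [hKval, div_lt_one hs3pos]
    have h6 : (s ^ 3) ^ 2 = (M ^ 2 - a ^ 2 / 3) ^ 3 := by
      rw [show (s ^ 3) ^ 2 = (s ^ 2) ^ 3 by ring, hs2]
    have hgt : (M * (M ^ 2 - a ^ 2)) ^ 2 < (s ^ 3) ^ 2 := by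
      rw [h6]
      have d1 : 0 < a ^ 2 * M ^ 2 * (M ^ 2 - a ^ 2) :=
        mul_pos (by positivity) (by linarith)
      have d2 : 0 < a ^ 2 * a ^ 2 * (M ^ 2 - a ^ 2) :=
        mul_pos (by positivity) (by linarith)
      have d3 : (0:ℝ) < a ^ 2 * a ^ 2 * a ^ 2 := by positivity
      have hid : (M ^ 2 - a ^ 2 / 3) ^ 3 - (M * (M ^ 2 - a ^ 2)) ^ 2
          = a ^ 2 * M ^ 2 * (M ^ 2 - a ^ 2)
            + (1 / 3) * (a ^ 2 * a ^ 2 * (M ^ 2 - a ^ 2))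
            + (8 / 27) * (a ^ 2 * a ^ 2 * a ^ 2) := by ring
      linarith [d1, d2, d3, hid]
    exact lt_of_pow_lt_pow_left₀ 2 hs3pos.le hgt
  -- c3
  set c3 := Real.cos ((1 / 3) * Real.arccos K) with hc3
  have hA3l : 0 < Real.arccos K := Real.arccos_pos.2 hK1
  have hA3u : Real.arccos K < Real.pi / 2 := Real.arccos_lt_pi_div_two.2 hK0
  have hc3u : c3 < 1 := by
    have h := cos_lt_cos_aux 0 ((1 / 3) * Real.arccos K) le_rfl (by linarith) (by positivity)
    rwa [Real.cos_zero, ← hc3] at h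
  have hc3l : Real.sqrt 3 / 2 < c3 := by
    have h := cos_lt_cos_aux ((1 / 3) * Real.arccos K) (Real.pi / 6) (by positivity)
      (by linarith) (by linarith)
    rwa [Real.cos_pi_div_six, ← hc3] at h
  have hsqrt3 : 1 < Real.sqrt 3 := by
    rw [show (1:ℝ) = Real.sqrt 1 from (Real.sqrt_one).symm]
    exact Real.sqrt_lt_sqrt (by norm_num) (by norm_num)
  have hc3half : 1 / 2 < c3 := by linarith
  have hcA3 : Real.cos (Real.arccos K) = K := Real.cos_arccos (by linarith) (le_of_lt hK1)
  have hkey3 : s ^ 3 * (4 * c3 ^ 3 - 3 * c3) = M * (M ^ 2 - a ^ 2) := by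
    have h3 : (3 : ℝ) * ((1 / 3) * Real.arccos K) = Real.arccos K := by ring
    have h := Real.cos_three_mul ((1 / 3) * Real.arccos K)
    rw [← hc3, h3, hcA3, hKval] at h
    have hsne : s ^ 3 ≠ 0 := ne_of_gt hs3pos
    field_simp at h
    linear_combination -h
  have hr3def : r3 = M + 2 * s * c3 := by rw [hr3]
  clear_value w A1 c1 A2 c2 s K c3
  clear hK hKval hs3 hK0 hK1 hA3l hA3u hcA3 hc3 hr3 K
  have hsc3 : s * c3 < s := mul_lt_of_lt_one_right hs0 hc3u
  have hsc3' : 0 < s * (2 * c3 - 1) := mul_pos hs0 (by linarith)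
  have hr3l : M + s ≤ r3 := by rw [hr3def]; linarith [hsc3']
  have hr3u : r3 < 3 * M := by rw [hr3def]; linarith [hsc3, hsM]
  -- Q(r3) = 0
  have hQ3 : r3 ^ 3 - 3 * M * r3 ^ 2 + a ^ 2 * r3 + a ^ 2 * M = 0 := by
    rw [hr3def]
    linear_combination 2 * hkey3 + 6 * s * c3 * hs2
  -- Q(r1) < 0
  have hQ1 : r1 ^ 3 - 3 * M * r1 ^ 2 + a ^ 2 * r1 + a ^ 2 * M < 0 := by
    rw [hr1]
    have hE : 2 * ((2 * M * (1 + c1)) ^ 3 - 3 * M * (2 * M * (1 + c1)) ^ 2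
        + a ^ 2 * (2 * M * (1 + c1)) + a ^ 2 * M)
        = M ^ 3 * (1 + c1) * (2 * c1 - 1) * (2 * c1 + 1) * (2 * c1 + 5) := by
      linear_combination (-(M * (2 * c1 + 3))) * hkey1
    have hpos : 0 < (M ^ 3 * (1 + c1)) * ((1 - 2 * c1) * ((2 * c1 + 1) * (2 * c1 + 5))) :=
      mul_pos (mul_pos (pow_pos hM 3) (by linarith))
        (mul_pos (by linarith) (mul_pos (by linarith) (by linarith)))
    linarith [hE, hpos]
  -- conclusions
  have H1 : M < rp := by rw [hrp]; linarith
  have H2 : rp < r1 := by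
    by_contra h
    push_neg at h
    have hrpu : rp < 2 * M := by rw [hrp]; linarith
    have hPrp : rp ^ 3 - 6 * M * rp ^ 2 + 9 * M ^ 2 * rp - 4 * a ^ 2 * M > 0 := by
      have hE : rp ^ 3 - 6 * M * rp ^ 2 + 9 * M ^ 2 * rp - 4 * a ^ 2 * M
          = w ^ 2 * (M + w) := by
        rw [hrp]; linear_combination (-4 * M) * hw2
      rw [hE]
      positivity
    exact P_anti_aux M a r1 rp hr1l.le h (by linarith) hP1 hPrp
  have H3 : r1 < r3 := by
    by_contra h
    push_neg at h
    exact Q_mono_aux M a s r3 r1 hs0 hs2 hr3l h hQ3 hQ1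
  have H4 : r3 < r2 := by linarith
  exact ⟨H1, H2, H3, H4, hr2u⟩
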